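/- Let Q be the A₃ quiver 1 ↔ 2 ↔ 3 (any orientation) with dimension vector d = (m, n, 1), and let Q_d be its leg-extended quiver with canonical dimension vector d̂. Then there is no dimension vector e ≤ d̂ lying in the fundamental domain F_{Q_d} with e_{(3,1)} = 1 and e_{(1,1)} = e_{(2,1)} = 1. (Key step: the fundamental-domain inequalities force e_{(i,k)} = k for i = 1,2 and all k, and then (e, (1,m)) ≤ 0 gives m + 1 ≤ n while (e, (2,n)) ≤ 0 gives n ≤ m, a contradiction.) -/

import Mathlib

section QuiverDefs

variable {V A : Type} [Fintype V] [Fintype A] [DecidableEq V]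

/-- The Euler form of the quiver with arrows `a : s a → t a`. -/
def eulerForm (s t : A → V) (d e : V → ℤ) : ℤ :=
  (∑ i, d i * e i) - ∑ a, d (s a) * e (t a)

/-- The symmetrized Euler form. -/
def symForm (s t : A → V) (d e : V → ℤ) : ℤ :=
  eulerForm s t d e + eulerForm s t e d

/-- The simple reflection at vertex `i`. -/
def reflAt (s t : A → V) (i : V) (d : V → ℤ) : V → ℤ :=
  fun j => d j - symForm s t d (Pi.single i 1) * ((Pi.single i 1 : V → ℤ) j)

def adjacent (s t : A → V) (i j : V) : Prop :=
  ∃ a, (s a = i ∧ t a = j) ∨ (s a = j ∧ t a = i)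

def connectedSupport (s t : A → V) (f : V → ℤ) : Prop :=
  ∀ i j, f i ≠ 0 → f j ≠ 0 →
    Relation.ReflTransGen (fun p q => adjacent s t p q ∧ f p ≠ 0 ∧ f q ≠ 0) i j

/-- Membership in the fundamental domain. -/
def inFund (s t : A → V) (f : V → ℤ) : Prop :=
  f ≠ 0 ∧ (∀ i, 0 ≤ f i) ∧ connectedSupport s t f ∧
    ∀ i, symForm s t f (Pi.single i 1) ≤ 0

/-- Imaginary roots: Weyl group translates of the fundamental domain. -/
inductive IsImaginaryRoot (s t : A → V) : (V → ℤ) → Prop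
  | fund (f) : inFund s t f → IsImaginaryRoot s t f
  | refl (i f) : IsImaginaryRoot s t f → IsImaginaryRoot s t (reflAt s t i f)

/-- Real roots: Weyl group translates of the coordinate vectors. -/
inductive IsRealRoot (s t : A → V) : (V → ℤ) → Prop
  | simple (i : V) : IsRealRoot s t (Pi.single i 1)
  | refl (i f) : IsRealRoot s t f → IsRealRoot s t (reflAt s t i f)

variable (s t : A → V)

/-- Vertices of the leg-extended quiver `Q_d`: pairs `(i,k)`, where `k : Fin (d i)`
represents the vertex `(i, k+1)` of the paper. -/
abbrev LegVertex (d : V → ℕ) : Type := Σ i : V, Fin (d i)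

/-- Leg arrows `β_{(i,k)} : (i,k) → (i,k+1)` of `Q_d`. -/
abbrev LegArrow (d : V → ℕ) : Type := Σ i : V, {k : Fin (d i) // (k : ℕ) + 1 < d i}

/-- The arrows of `Q_d` coming from arrows of `Q` (joining the tops of the legs). -/
abbrev OrigArrow (d : V → ℕ) : Type := {a : A // 0 < d (s a) ∧ 0 < d (t a)}

/-- Arrows of the leg-extended quiver `Q_d`. -/
abbrev QdArrow (d : V → ℕ) : Type := LegArrow d ⊕ OrigArrow s t d

/-- Source map of `Q_d`. -/
def QdSrc (d : V → ℕ) : QdArrow s t d → LegVertex d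
  | Sum.inl ⟨i, k, _⟩ => ⟨i, k⟩
  | Sum.inr ⟨a, h⟩ => ⟨s a, ⟨d (s a) - 1, by omega⟩⟩

/-- Target map of `Q_d`. -/
def QdTgt (d : V → ℕ) : QdArrow s t d → LegVertex d
  | Sum.inl ⟨i, k, h⟩ => ⟨i, ⟨(k : ℕ) + 1, h⟩⟩
  | Sum.inr ⟨a, h⟩ => ⟨t a, ⟨d (t a) - 1, by omega⟩⟩

lemma symForm_single {V A : Type} [Fintype V] [Fintype A] [DecidableEq V]
    (s t : A → V) (f : V → ℤ) (w : V) :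
    symForm s t f (Pi.single w 1) =
      2 * f w - ∑ a, ((if t a = w then f (s a) else 0) + (if s a = w then f (t a) else 0)) := by
  unfold symForm eulerForm
  simp only [Pi.single_apply, mul_ite, ite_mul, mul_one, mul_zero, one_mul, zero_mul,
    Finset.sum_ite_eq', Finset.mem_univ, if_true, Finset.sum_add_distrib]
  ring

namespace A3proof
variable (m n : ℕ)

local notation "s₀" => (![0, 1] : Fin 2 → Fin 3)
local notation "t₀" => (![1, 2] : Fin 2 → Fin 3)
local notation "dd" => (![m, n, 1] : Fin 3 → ℕ)

lemma sum_split (hm : 1 ≤ m) (hn : 1 ≤ n) (g : QdArrow s₀ t₀ dd → ℤ) :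
    ∑ a, g a = (∑ x : {k : Fin ((![m,n,1] : Fin 3 → ℕ) 0) // (k:ℕ)+1 < (![m,n,1] : Fin 3 → ℕ) 0}, g (.inl ⟨0, x⟩))
      + (∑ x : {k : Fin ((![m,n,1] : Fin 3 → ℕ) 1) // (k:ℕ)+1 < (![m,n,1] : Fin 3 → ℕ) 1}, g (.inl ⟨1, x⟩))
      + (g (.inr ⟨0, by refine ⟨?_, ?_⟩ <;> simp <;> omega⟩) + g (.inr ⟨1, by refine ⟨?_, ?_⟩ <;> simp <;> omega⟩)) := by
  rw [Fintype.sum_sum_type, ← Finset.univ_sigma_univ, Finset.sum_sigma, Fin.sum_univ_three]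
  have h2 : ∑ x : {k : Fin ((![m,n,1] : Fin 3 → ℕ) 2) // (k:ℕ)+1 < (![m,n,1] : Fin 3 → ℕ) 2},
      g (.inl ⟨2, x⟩) = 0 := by
    apply Finset.sum_eq_zero
    rintro ⟨⟨k, hk⟩, h⟩ -
    simp only [Matrix.cons_val_two, Matrix.tail_cons, Matrix.head_cons] at h
    omega
  have h3 : ∑ x : OrigArrow s₀ t₀ dd, g (.inr x)
      = g (.inr ⟨0, by refine ⟨?_, ?_⟩ <;> simp <;> omega⟩) + g (.inr ⟨1, by refine ⟨?_, ?_⟩ <;> simp <;> omega⟩) := by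
    have hall : ∀ a : Fin 2, 0 < (dd) (s₀ a) ∧ 0 < (dd) (t₀ a) := by
      intro a; fin_cases a <;> simp <;> omega
    rw [← Equiv.sum_comp (Equiv.subtypeUnivEquiv hall).symm (fun x => g (.inr x)),
      Fin.sum_univ_two]
    rfl
  rw [h2, h3]
  ring

lemma fib_sum_single {D : ℕ} (g : {k : Fin D // (k:ℕ)+1 < D} → ℤ) (j : ℕ) (hj : j + 1 < D)
    (h : ∀ x : {k : Fin D // (k:ℕ)+1 < D}, (x.1 : ℕ) ≠ j → g x = 0) :
    ∑ x, g x = g ⟨⟨j, by omega⟩, hj⟩ := by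
  apply Fintype.sum_eq_single
  intro b hb
  exact h b (fun hbj => hb (by apply Subtype.ext; exact Fin.ext hbj))

lemma fib_sum_zero {D : ℕ} (g : {k : Fin D // (k:ℕ)+1 < D} → ℤ) (h : ∀ x, g x = 0) :
    ∑ x, g x = 0 := Finset.sum_eq_zero fun x _ => h x

lemma vtx_eq_iff {i j : Fin 3} {a : Fin ((dd) i)} {b : Fin ((dd) j)} :
    (⟨i, a⟩ : LegVertex dd) = ⟨j, b⟩ ↔ (i = j ∧ (a : ℕ) = (b : ℕ)) := by
  constructor
  · intro h
    refine ⟨congrArg Sigma.fst h, ?_⟩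
    have := congrArg (fun w : LegVertex dd => ((w.2 : ℕ))) h
    simpa using this
  · rintro ⟨rfl, h⟩
    exact congrArg _ (Fin.ext h)

set_option maxHeartbeats 1000000 in
lemma constr0 (hm : 1 ≤ m) (hn : 1 ≤ n) (f : LegVertex dd → ℤ)
    (hf : ∀ w, symForm (QdSrc s₀ t₀ dd) (QdTgt s₀ t₀ dd) f (Pi.single w 1) ≤ 0)
    (k : ℕ) (hk : k < m) :
    2 * f ⟨0, ⟨k, hk⟩⟩ ≤ (if 1 ≤ k then f ⟨0, ⟨k-1, by show k-1 < m; omega⟩⟩ else 0)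
      + (if h : k + 1 < m then f ⟨0, ⟨k+1, h⟩⟩ else 0)
      + (if k = m - 1 then f ⟨1, ⟨n-1, by show n-1 < n; omega⟩⟩ else 0) := by
  have H := hf ⟨0, ⟨k, hk⟩⟩
  rw [symForm_single, sum_split m n hm hn] at H
  rw [Finset.sum_add_distrib, Finset.sum_add_distrib] at H
  simp only [QdSrc, QdTgt] at H
  -- leg-0 incoming sum
  have e0T : ∑ x : {k' : Fin ((dd) 0) // (k' : ℕ) + 1 < (dd) 0},
      (if (⟨0, ⟨(x.1 : ℕ) + 1, x.2⟩⟩ : LegVertex dd) = ⟨0, ⟨k, hk⟩⟩ then f ⟨0, x.1⟩ else 0)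
      = (if 1 ≤ k then f ⟨0, ⟨k-1, by show k-1 < m; omega⟩⟩ else 0) := by
    by_cases h1 : 1 ≤ k
    · rw [if_pos h1, fib_sum_single _ (k-1) (by show k-1+1 < m; omega)]
      · rw [if_pos ((vtx_eq_iff m n).2 ⟨rfl, by show k-1+1 = k; omega⟩)]
      · intro x hne
        rw [if_neg]
        rw [vtx_eq_iff]
        rintro ⟨-, h2⟩
        simp only [Fin.val_mk] at h2
        exact hne (by omega)
    · rw [if_neg h1]
      apply fib_sum_zero
      intro x
      rw [if_neg]
      rw [vtx_eq_iff]
      rintro ⟨-, h2⟩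
      simp only [Fin.val_mk] at h2
      omega
  -- leg-0 outgoing sum
  have e0S : ∑ x : {k' : Fin ((dd) 0) // (k' : ℕ) + 1 < (dd) 0},
      (if (⟨0, x.1⟩ : LegVertex dd) = ⟨0, ⟨k, hk⟩⟩ then f ⟨0, ⟨(x.1 : ℕ) + 1, x.2⟩⟩ else 0)
      = (if h : k + 1 < m then f ⟨0, ⟨k+1, h⟩⟩ else 0) := by
    by_cases h1 : k + 1 < m
    · rw [dif_pos h1, fib_sum_single _ k (by show k+1 < m; omega)]
      · rw [if_pos ((vtx_eq_iff m n).2 ⟨rfl, rfl⟩)]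
      · intro x hne
        rw [if_neg]
        rw [vtx_eq_iff]
        rintro ⟨-, h2⟩
        simp only [Fin.val_mk] at h2
        exact hne (by omega)
    · rw [dif_neg h1]
      apply fib_sum_zero
      intro x
      rw [if_neg]
      rw [vtx_eq_iff]
      rintro ⟨-, h2⟩
      simp only [Fin.val_mk] at h2
      have hx := x.2
      simp only [Matrix.cons_val_zero] at hx
      omega
  -- leg-1 sums vanish
  have e1T : ∑ x : {k' : Fin ((dd) 1) // (k' : ℕ) + 1 < (dd) 1},
      (if (⟨1, ⟨(x.1 : ℕ) + 1, x.2⟩⟩ : LegVertex dd) = ⟨0, ⟨k, hk⟩⟩ then f ⟨1, x.1⟩ else 0)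
      = 0 := by
    apply fib_sum_zero
    intro x
    rw [if_neg]
    rw [vtx_eq_iff]
    rintro ⟨h2, -⟩
    exact absurd h2 (by decide)
  have e1S : ∑ x : {k' : Fin ((dd) 1) // (k' : ℕ) + 1 < (dd) 1},
      (if (⟨1, x.1⟩ : LegVertex dd) = ⟨0, ⟨k, hk⟩⟩ then f ⟨1, ⟨(x.1 : ℕ) + 1, x.2⟩⟩ else 0)
      = 0 := by
    apply fib_sum_zero
    intro x
    rw [if_neg]
    rw [vtx_eq_iff]
    rintro ⟨h2, -⟩
    exact absurd h2 (by decide)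
  erw [e0T, e0S, e1T] at H
  have hA : ¬ ((⟨(![1,2] : Fin 2 → Fin 3) 0, ⟨(dd) ((![1,2] : Fin 2 → Fin 3) 0) - 1,
      by show n-1 < n; omega⟩⟩ : LegVertex dd) = ⟨0, ⟨k, hk⟩⟩) := by
    rw [vtx_eq_iff]; rintro ⟨h2, -⟩; exact absurd h2 (by decide)
  have hC : ¬ ((⟨(![1,2] : Fin 2 → Fin 3) 1, ⟨(dd) ((![1,2] : Fin 2 → Fin 3) 1) - 1,
      by show (0:ℕ) < 1; omega⟩⟩ : LegVertex dd) = ⟨0, ⟨k, hk⟩⟩) := by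
    rw [vtx_eq_iff]; rintro ⟨h2, -⟩; exact absurd h2 (by decide)
  have hD : ¬ ((⟨(![0,1] : Fin 2 → Fin 3) 1, ⟨(dd) ((![0,1] : Fin 2 → Fin 3) 1) - 1,
      by show n-1 < n; omega⟩⟩ : LegVertex dd) = ⟨0, ⟨k, hk⟩⟩) := by
    rw [vtx_eq_iff]; rintro ⟨h2, -⟩; exact absurd h2 (by decide)
  simp only [hA, hC, hD, if_false] at H
  by_cases hkm : k = m - 1
  · have hB : ((⟨(![0,1] : Fin 2 → Fin 3) 0, ⟨(dd) ((![0,1] : Fin 2 → Fin 3) 0) - 1,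
        by show m-1 < m; omega⟩⟩ : LegVertex dd) = ⟨0, ⟨k, hk⟩⟩) :=
      (vtx_eq_iff m n).2 ⟨rfl, by show m - 1 = k; omega⟩
    simp only [eq_true hB, if_true, show f ⟨(![1,2] : Fin 2 → Fin 3) 0, ⟨(dd) ((![1,2] : Fin 2 → Fin 3) 0) - 1,
        by show n-1 < n; omega⟩⟩ = f ⟨1, ⟨n-1, by show n-1 < n; omega⟩⟩ from rfl] at H
    rw [if_pos hkm]
    linarith
  · have hB : ¬ ((⟨(![0,1] : Fin 2 → Fin 3) 0, ⟨(dd) ((![0,1] : Fin 2 → Fin 3) 0) - 1,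
        by show m-1 < m; omega⟩⟩ : LegVertex dd) = ⟨0, ⟨k, hk⟩⟩) := by
      rw [vtx_eq_iff]; rintro ⟨-, h2⟩
      exact absurd (show m - 1 = k from h2) (by omega)
    simp only [hB, if_false] at H
    rw [if_neg hkm]
    linarith

set_option maxHeartbeats 8000000 in
lemma constr1 (hm : 1 ≤ m) (hn : 1 ≤ n) (f : LegVertex dd → ℤ)
    (hf : ∀ w, symForm (QdSrc s₀ t₀ dd) (QdTgt s₀ t₀ dd) f (Pi.single w 1) ≤ 0)
    (k : ℕ) (hk : k < n) :
    2 * f ⟨1, ⟨k, hk⟩⟩ ≤ (if 1 ≤ k then f ⟨1, ⟨k-1, by show k-1 < n; omega⟩⟩ else 0)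
      + (if h : k + 1 < n then f ⟨1, ⟨k+1, h⟩⟩ else 0)
      + (if k = n - 1 then f ⟨0, ⟨m-1, by show m-1 < m; omega⟩⟩ + f ⟨2, ⟨0, by show (0:ℕ) < 1; omega⟩⟩ else 0) := by
  have H := hf ⟨1, ⟨k, hk⟩⟩
  rw [symForm_single, sum_split m n hm hn] at H
  rw [Finset.sum_add_distrib, Finset.sum_add_distrib] at H
  simp only [QdSrc, QdTgt] at H
  have e0T : ∑ x : {k' : Fin ((dd) 0) // (k' : ℕ) + 1 < (dd) 0},
      (if (⟨0, ⟨(x.1 : ℕ) + 1, x.2⟩⟩ : LegVertex dd) = ⟨1, ⟨k, hk⟩⟩ then f ⟨0, x.1⟩ else 0)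
      = 0 := by
    apply fib_sum_zero
    intro x
    rw [if_neg]
    rw [vtx_eq_iff]
    rintro ⟨h2, -⟩
    exact absurd h2 (by decide)
  have e0S : ∑ x : {k' : Fin ((dd) 0) // (k' : ℕ) + 1 < (dd) 0},
      (if (⟨0, x.1⟩ : LegVertex dd) = ⟨1, ⟨k, hk⟩⟩ then f ⟨0, ⟨(x.1 : ℕ) + 1, x.2⟩⟩ else 0)
      = 0 := by
    apply fib_sum_zero
    intro x
    rw [if_neg]
    rw [vtx_eq_iff]
    rintro ⟨h2, -⟩
    exact absurd h2 (by decide)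
  have e1T : ∑ x : {k' : Fin ((dd) 1) // (k' : ℕ) + 1 < (dd) 1},
      (if (⟨1, ⟨(x.1 : ℕ) + 1, x.2⟩⟩ : LegVertex dd) = ⟨1, ⟨k, hk⟩⟩ then f ⟨1, x.1⟩ else 0)
      = (if 1 ≤ k then f ⟨1, ⟨k-1, by show k-1 < n; omega⟩⟩ else 0) := by
    by_cases h1 : 1 ≤ k
    · rw [if_pos h1, fib_sum_single _ (k-1) (by show k-1+1 < n; omega)]
      · rw [if_pos ((vtx_eq_iff m n).2 ⟨rfl, by show k-1+1 = k; omega⟩)]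
      · intro x hne
        rw [if_neg]
        rw [vtx_eq_iff]
        rintro ⟨-, h2⟩
        simp only [Fin.val_mk] at h2
        exact hne (by omega)
    · rw [if_neg h1]
      apply fib_sum_zero
      intro x
      rw [if_neg]
      rw [vtx_eq_iff]
      rintro ⟨-, h2⟩
      simp only [Fin.val_mk] at h2
      omega
  have e1S : ∑ x : {k' : Fin ((dd) 1) // (k' : ℕ) + 1 < (dd) 1},
      (if (⟨1, x.1⟩ : LegVertex dd) = ⟨1, ⟨k, hk⟩⟩ then f ⟨1, ⟨(x.1 : ℕ) + 1, x.2⟩⟩ else 0)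
      = (if h : k + 1 < n then f ⟨1, ⟨k+1, h⟩⟩ else 0) := by
    by_cases h1 : k + 1 < n
    · rw [dif_pos h1, fib_sum_single _ k (by show k+1 < n; omega)]
      · rw [if_pos ((vtx_eq_iff m n).2 ⟨rfl, rfl⟩)]
      · intro x hne
        rw [if_neg]
        rw [vtx_eq_iff]
        rintro ⟨-, h2⟩
        simp only [Fin.val_mk] at h2
        exact hne (by omega)
    · rw [dif_neg h1]
      apply fib_sum_zero
      intro x
      rw [if_neg]
      rw [vtx_eq_iff]
      rintro ⟨-, h2⟩
      simp only [Fin.val_mk] at h2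
      have hx := x.2
      simp only [Matrix.cons_val_one, Matrix.head_cons, Matrix.cons_val_zero] at hx
      omega
  erw [e1T, e1S, e0T] at H
  -- inr conditions: (1) tgt of arrow0 = ⟨1,n-1⟩; (2) src arrow0 = ⟨0,m-1⟩ : neg;
  -- (3) tgt arrow1 = ⟨2,0⟩ : neg; (4) src arrow1 = ⟨1,n-1⟩.
  have hB : ¬ ((⟨(![0,1] : Fin 2 → Fin 3) 0, ⟨(dd) ((![0,1] : Fin 2 → Fin 3) 0) - 1,
      by show m-1 < m; omega⟩⟩ : LegVertex dd) = ⟨1, ⟨k, hk⟩⟩) := by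
    rw [vtx_eq_iff]; rintro ⟨h2, -⟩; exact absurd h2 (by decide)
  have hC : ¬ ((⟨(![1,2] : Fin 2 → Fin 3) 1, ⟨(dd) ((![1,2] : Fin 2 → Fin 3) 1) - 1,
      by show (0:ℕ) < 1; omega⟩⟩ : LegVertex dd) = ⟨1, ⟨k, hk⟩⟩) := by
    rw [vtx_eq_iff]; rintro ⟨h2, -⟩; exact absurd h2 (by decide)
  simp only [hB, hC, if_false] at H
  by_cases hkn : k = n - 1
  · have hA : ((⟨(![1,2] : Fin 2 → Fin 3) 0, ⟨(dd) ((![1,2] : Fin 2 → Fin 3) 0) - 1,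
        by show n-1 < n; omega⟩⟩ : LegVertex dd) = ⟨1, ⟨k, hk⟩⟩) :=
      (vtx_eq_iff m n).2 ⟨rfl, by show n - 1 = k; omega⟩
    have hD : ((⟨(![0,1] : Fin 2 → Fin 3) 1, ⟨(dd) ((![0,1] : Fin 2 → Fin 3) 1) - 1,
        by show n-1 < n; omega⟩⟩ : LegVertex dd) = ⟨1, ⟨k, hk⟩⟩) :=
      (vtx_eq_iff m n).2 ⟨rfl, by show n - 1 = k; omega⟩
    simp only [eq_true hA, eq_true hD, if_true] at H
    simp only [show f ⟨(![0,1] : Fin 2 → Fin 3) 0, ⟨(dd) ((![0,1] : Fin 2 → Fin 3) 0) - 1,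
        by show m-1 < m; omega⟩⟩ = f ⟨0, ⟨m-1, by show m-1 < m; omega⟩⟩ from rfl,
      show f ⟨(![1,2] : Fin 2 → Fin 3) 1, ⟨(dd) ((![1,2] : Fin 2 → Fin 3) 1) - 1,
        by show (0:ℕ) < 1; omega⟩⟩ = f ⟨2, ⟨0, by show (0:ℕ) < 1; omega⟩⟩ from rfl] at H
    rw [if_pos hkn]
    linarith
  · have hA : ¬ ((⟨(![1,2] : Fin 2 → Fin 3) 0, ⟨(dd) ((![1,2] : Fin 2 → Fin 3) 0) - 1,
        by show n-1 < n; omega⟩⟩ : LegVertex dd) = ⟨1, ⟨k, hk⟩⟩) := by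
      rw [vtx_eq_iff]; rintro ⟨-, h2⟩
      exact absurd (show n - 1 = k from h2) (by omega)
    have hD : ¬ ((⟨(![0,1] : Fin 2 → Fin 3) 1, ⟨(dd) ((![0,1] : Fin 2 → Fin 3) 1) - 1,
        by show n-1 < n; omega⟩⟩ : LegVertex dd) = ⟨1, ⟨k, hk⟩⟩) := by
      rw [vtx_eq_iff]; rintro ⟨-, h2⟩
      exact absurd (show n - 1 = k from h2) (by omega)
    simp only [hA, hD, if_false] at H
    rw [if_neg hkn]
    linarith

end A3proof

set_option maxHeartbeats 4000000 in
/-- Theorem 4.2, key computation: for the `A₃` quiver `1 ↔ 2 ↔ 3` with dimension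
vector `d = (m,n,1)`, there is no dimension vector `e ≤ d̂` in the fundamental
domain of the leg-extended quiver `Q_d` with `e_{(3,1)} = e_{(1,1)} = e_{(2,1)} = 1`.
(Vertices `(i,k)` of the paper correspond to `⟨i-1, k-1⟩` here, and
`d̂_{(i,k)} = k` becomes `w.2 + 1`.) -/
theorem no_fundamental_root_A3 (m n : ℕ) (hm : 1 ≤ m) (hn : 1 ≤ n) :
    ¬ ∃ f : LegVertex (![m, n, 1] : Fin 3 → ℕ) → ℤ,
      inFund (QdSrc (![0, 1] : Fin 2 → Fin 3) (![1, 2] : Fin 2 → Fin 3) ![m, n, 1])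
             (QdTgt (![0, 1] : Fin 2 → Fin 3) (![1, 2] : Fin 2 → Fin 3) ![m, n, 1]) f ∧
      (∀ w : LegVertex (![m, n, 1] : Fin 3 → ℕ), f w ≤ (w.2 : ℕ) + 1) ∧
      f ⟨2, ⟨0, by exact Nat.one_pos⟩⟩ = 1 ∧
      f ⟨0, ⟨0, by exact hm⟩⟩ = 1 ∧
      f ⟨1, ⟨0, by exact hn⟩⟩ = 1 := by
  rintro ⟨f, hF, hle, h2, h0, h1⟩
  have hsym := hF.2.2.2
  -- values along leg 0
  have hv0 : ∀ k, ∀ hkm : k < m, f ⟨0, ⟨k, hkm⟩⟩ = (k : ℤ) + 1 := by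
    intro k
    induction k using Nat.strong_induction_on with
    | _ k ih =>
      intro hkm
      rcases Nat.eq_zero_or_pos k with rfl | hk1
      · norm_num
        exact h0
      · obtain ⟨j, rfl⟩ : ∃ j, k = j + 1 := ⟨k - 1, by omega⟩
        have hjm : j < m := by omega
        have C := A3proof.constr0 m n hm hn f hsym j hjm
        rw [dif_pos hkm, if_neg (show ¬ j = m - 1 by omega)] at C
        have hub := hle ⟨0, ⟨j+1, hkm⟩⟩
        simp only [Fin.val_mk] at hub
        push_cast at hub ⊢
        have hj := ih j (by omega) hjm
        by_cases h1j : 1 ≤ j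
        · rw [if_pos h1j] at C
          have hj1 := ih (j-1) (by omega) (by show j - 1 < m; omega)
          have hc : ((j-1 : ℕ) : ℤ) = (j : ℤ) - 1 := by omega
          erw [hj, hj1] at C
          have C2 : 2 * ((j:ℤ) + 1) ≤ ((j-1:ℕ):ℤ) + 1 + f ⟨0, ⟨j + 1, hkm⟩⟩ + 0 := C
          exact le_antisymm hub (by linarith [C2, hc] : (j:ℤ) + 1 + 1 ≤ f ⟨0, ⟨j + 1, hkm⟩⟩)
        · rw [if_neg h1j] at C
          have hj0 : j = 0 := by omega
          subst hj0
          norm_num at hj hub ⊢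
          exact le_antisymm hub (by erw [hj] at C; simpa using C)
  -- values along leg 1
  have hv1 : ∀ k, ∀ hkn : k < n, f ⟨1, ⟨k, hkn⟩⟩ = (k : ℤ) + 1 := by
    intro k
    induction k using Nat.strong_induction_on with
    | _ k ih =>
      intro hkn
      rcases Nat.eq_zero_or_pos k with rfl | hk1
      · norm_num
        exact h1
      · obtain ⟨j, rfl⟩ : ∃ j, k = j + 1 := ⟨k - 1, by omega⟩
        have hjn : j < n := by omega
        have C := A3proof.constr1 m n hm hn f hsym j hjn
        rw [dif_pos hkn, if_neg (show ¬ j = n - 1 by omega)] at C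
        have hub := hle ⟨1, ⟨j+1, hkn⟩⟩
        simp only [Fin.val_mk] at hub
        push_cast at hub ⊢
        have hj := ih j (by omega) hjn
        by_cases h1j : 1 ≤ j
        · rw [if_pos h1j] at C
          have hj1 := ih (j-1) (by omega) (by show j - 1 < n; omega)
          have hc : ((j-1 : ℕ) : ℤ) = (j : ℤ) - 1 := by omega
          erw [hj, hj1] at C
          have C2 : 2 * ((j:ℤ) + 1) ≤ ((j-1:ℕ):ℤ) + 1 + f ⟨1, ⟨j + 1, hkn⟩⟩ + 0 := C
          exact le_antisymm hub (by linarith [C2, hc] : (j:ℤ) + 1 + 1 ≤ f ⟨1, ⟨j + 1, hkn⟩⟩)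
        · rw [if_neg h1j] at C
          have hj0 : j = 0 := by omega
          subst hj0
          norm_num at hj hub ⊢
          exact le_antisymm hub (by erw [hj] at C; simpa using C)
  -- top of leg 0 : m + 1 ≤ n
  have top0 : (m : ℤ) + 1 ≤ n := by
    have C := A3proof.constr0 m n hm hn f hsym (m-1) (by omega)
    rw [dif_neg (show ¬ (m-1+1 < m) by omega), if_pos rfl] at C
    have hm1 := hv0 (m-1) (by show m - 1 < m; omega)
    have hn1 := hv1 (n-1) (by show n - 1 < n; omega)
    have hc1 : ((m-1 : ℕ) : ℤ) = (m : ℤ) - 1 := by omega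
    have hc2 : ((n-1 : ℕ) : ℤ) = (n : ℤ) - 1 := by omega
    by_cases h2m : 1 ≤ m - 1
    · rw [if_pos h2m] at C
      have hm2 := hv0 (m-1-1) (by show m - 1 - 1 < m; omega)
      have hc3 : ((m-1-1 : ℕ) : ℤ) = (m : ℤ) - 2 := by omega
      linarith [C, hm1, hm2, hn1, hc1, hc2, hc3]
    · rw [if_neg h2m] at C
      have hm1' : m = 1 := by omega
      linarith [C, hm1, hn1, hc1, hc2]
  -- top of leg 1 : n ≤ m, contradiction
  have hn2 : 2 ≤ n := by omega
  have C := A3proof.constr1 m n hm hn f hsym (n-1) (by omega)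
  rw [dif_neg (show ¬ (n-1+1 < n) by omega), if_pos rfl,
    if_pos (show 1 ≤ n - 1 by omega)] at C
  have hn1 := hv1 (n-1) (by show n - 1 < n; omega)
  have hn2' := hv1 (n-1-1) (by show n - 1 - 1 < n; omega)
  have hm1 := hv0 (m-1) (by show m - 1 < m; omega)
  have hc1 : ((n-1 : ℕ) : ℤ) = (n : ℤ) - 1 := by omega
  have hc2 : ((n-1-1 : ℕ) : ℤ) = (n : ℤ) - 2 := by omega
  have hc3 : ((m-1 : ℕ) : ℤ) = (m : ℤ) - 1 := by omega
  have h2' : f ⟨2, ⟨0, by show (0:ℕ) < 1; omega⟩⟩ = 1 := h2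
  linarith [C, hn1, hn2', hm1, hc1, hc2, hc3, h2', top0]

end QuiverDefs
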